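/- The set of positive integers n such that 5 divides the numerator of H(n) is exactly {4, 20, 24}, i.e., J_5 = {4, 20, 24}. -/

import Mathlib

def H (n : ℕ) : ℚ := ∑ i ∈ Finset.range n, (1 : ℚ) / (i + 1)

instance : Fact (Nat.Prime 5) := ⟨by norm_num⟩

lemma val_nat (s a : ℕ) (ha : ¬ 5 ∣ a) (ha0 : a ≠ 0) :
    padicValRat 5 (((5^s*a : ℕ) : ℚ)) = s := by
  rw [padicValRat.of_nat, padicValNat.mul (pow_ne_zero _ (by norm_num)) ha0,
    padicValNat.prime_pow, padicValNat.eq_zero_of_not_dvd ha]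
  simp

lemma val_aux (s t a b : ℕ) (ha : ¬ 5 ∣ a) (hb : ¬ 5 ∣ b) (ha0 : a ≠ 0) (hb0 : b ≠ 0) :
    padicValRat 5 (((5^s*a : ℕ) : ℚ) / ((5^t*b : ℕ) : ℚ)) = (s : ℤ) - t := by
  rw [padicValRat.div (by positivity) (by positivity), val_nat s a ha ha0, val_nat t b hb hb0]

def A (n : ℕ) : ℚ := ∑ i ∈ (Finset.range n).filter (fun i => ¬ (5 ∣ (i+1))), (1 : ℚ) / (i + 1)

lemma H_pos {n : ℕ} (hn : 1 ≤ n) : 0 < H n := by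
  apply Finset.sum_pos (fun i _ => by positivity)
  exact Finset.nonempty_range_iff.mpr (by omega)

lemma H_split (n : ℕ) : H n = (1/5) * H (n/5) + A n := by
  rw [H, ← Finset.sum_filter_add_sum_filter_not (Finset.range n) (fun i => 5 ∣ (i+1))]
  congr 1
  rw [H, Finset.mul_sum]
  refine Finset.sum_nbij' (fun i => i/5) (fun j => 5*j+4) ?_ ?_ ?_ ?_ ?_
  · intro a ha
    simp only [Finset.mem_filter, Finset.mem_range] at ha ⊢
    omega
  · intro a ha
    simp only [Finset.mem_filter, Finset.mem_range] at ha ⊢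
    omega
  · intro a ha
    simp only [Finset.mem_filter, Finset.mem_range] at ha
    omega
  · intro a ha
    simp only [Finset.mem_range] at ha
    omega
  · intro a ha
    simp only [Finset.mem_filter, Finset.mem_range] at ha
    obtain ⟨h1, k, hk⟩ := ha
    have hdiv : a / 5 = k - 1 := by omega
    have h1k : 1 ≤ k := by omega
    have hcast : ((a : ℚ) + 1) = 5 * ((a/5 : ℕ) + 1) := by
      have : a + 1 = 5 * (a/5 + 1) := by omega
      exact_mod_cast congrArg (Nat.cast : ℕ → ℚ) this
    rw [hcast]
    have h5 : ((a/5 : ℕ) : ℚ) + 1 ≠ 0 := by positivity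
    field_simp

lemma calc_le (n s t a b : ℕ) (he : H n = ((5^s*a : ℕ) : ℚ) / ((5^t*b : ℕ) : ℚ))
    (ha : ¬ 5 ∣ a) (hb : ¬ 5 ∣ b) (ha0 : a ≠ 0) (hb0 : b ≠ 0) (hst : (s:ℤ) ≤ t) :
    padicValRat 5 (H n) ≤ 0 := by
  rw [he, val_aux s t a b ha hb ha0 hb0]; omega

lemma calc_ge (n s t a b : ℕ) (he : H n = ((5^s*a : ℕ) : ℚ) / ((5^t*b : ℕ) : ℚ))
    (ha : ¬ 5 ∣ a) (hb : ¬ 5 ∣ b) (ha0 : a ≠ 0) (hb0 : b ≠ 0) (hst : (t:ℤ) + 1 ≤ s) :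
    1 ≤ padicValRat 5 (H n) := by
  rw [he, val_aux s t a b ha hb ha0 hb0]; omega

lemma val_sum_nonneg (s : Finset ℕ) (f : ℕ → ℚ) (h : ∀ i ∈ s, 0 ≤ padicValRat 5 (f i)) :
    0 ≤ padicValRat 5 (∑ i ∈ s, f i) := by
  induction s using Finset.cons_induction with
  | empty => simp
  | cons a s ha ih =>
    rw [Finset.sum_cons]
    by_cases h0 : f a + ∑ i ∈ s, f i = 0
    · rw [h0]; simp
    · refine le_trans ?_ (padicValRat.min_le_padicValRat_add h0)
      exact le_min (h a (Finset.mem_cons_self a s)) (ih fun i hi => h i (Finset.mem_cons_of_mem hi))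

lemma A_nonneg (n : ℕ) : 0 ≤ padicValRat 5 (A n) := by
  apply val_sum_nonneg
  intro i hi
  simp only [Finset.mem_filter, Finset.mem_range] at hi
  have he : (1:ℚ)/((i:ℚ)+1) = (((i+1 : ℕ):ℚ))⁻¹ := by push_cast; rw [one_div]
  rw [he, padicValRat.inv, padicValRat.of_nat, padicValNat.eq_zero_of_not_dvd hi.2]
  simp

lemma val_fifth : padicValRat 5 ((1/5 : ℚ)) = -1 := by
  have h5 : ((5:ℕ):ℚ) = (5:ℚ) := by norm_num
  rw [one_div, padicValRat.inv, ← h5, padicValRat.self (by norm_num)]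

lemma step (n : ℕ) (h5 : 5 ≤ n) (hm : padicValRat 5 (H (n/5)) ≤ 0) :
    padicValRat 5 (H n) ≤ padicValRat 5 (H (n/5)) - 1 := by
  have hm1 : 1 ≤ n/5 := by omega
  have hHm : 0 < H (n/5) := H_pos hm1
  have hq : (1/5 : ℚ) * H (n/5) ≠ 0 := by positivity
  have hv : padicValRat 5 ((1/5 : ℚ) * H (n/5)) = padicValRat 5 (H (n/5)) - 1 := by
    rw [padicValRat.mul (by norm_num) (ne_of_gt hHm), val_fifth]; ring
  by_cases hA : A n = 0
  · rw [H_split n, hA, add_zero, hv]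
  · have hA0 := A_nonneg n
    have hqr : (1/5 : ℚ) * H (n/5) + A n ≠ 0 := by
      rw [← H_split n]; exact ne_of_gt (H_pos (by omega))
    have hlt : padicValRat 5 ((1/5 : ℚ) * H (n/5)) < padicValRat 5 (A n) := by
      rw [hv]; omega
    rw [H_split n, padicValRat.add_eq_of_lt hqr hq hA hlt, hv]

lemma small (m : ℕ) (hm1 : 1 ≤ m) (hm2 : m ≤ 24) (h4 : m ≠ 4) (h20 : m ≠ 20)
    (h24 : m ≠ 24) : padicValRat 5 (H m) ≤ 0 := by
  interval_cases m
  · exact calc_le 1 0 0 1 1 (by norm_num [H, Finset.sum_range_succ]) (by norm_num) (by norm_num) (by norm_num) (by norm_num) (by norm_num)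
  · exact calc_le 2 0 0 3 2 (by norm_num [H, Finset.sum_range_succ]) (by norm_num) (by norm_num) (by norm_num) (by norm_num) (by norm_num)
  · exact calc_le 3 0 0 11 6 (by norm_num [H, Finset.sum_range_succ]) (by norm_num) (by norm_num) (by norm_num) (by norm_num) (by norm_num)
  · exact absurd rfl h4
  · exact calc_le 5 0 1 137 12 (by norm_num [H, Finset.sum_range_succ]) (by norm_num) (by norm_num) (by norm_num) (by norm_num) (by norm_num)
  · exact calc_le 6 0 1 49 4 (by norm_num [H, Finset.sum_range_succ]) (by norm_num) (by norm_num) (by norm_num) (by norm_num) (by norm_num)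
  · exact calc_le 7 0 1 363 28 (by norm_num [H, Finset.sum_range_succ]) (by norm_num) (by norm_num) (by norm_num) (by norm_num) (by norm_num)
  · exact calc_le 8 0 1 761 56 (by norm_num [H, Finset.sum_range_succ]) (by norm_num) (by norm_num) (by norm_num) (by norm_num) (by norm_num)
  · exact calc_le 9 0 1 7129 504 (by norm_num [H, Finset.sum_range_succ]) (by norm_num) (by norm_num) (by norm_num) (by norm_num) (by norm_num)
  · exact calc_le 10 0 1 7381 504 (by norm_num [H, Finset.sum_range_succ]) (by norm_num) (by norm_num) (by norm_num) (by norm_num) (by norm_num)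
  · exact calc_le 11 0 1 83711 5544 (by norm_num [H, Finset.sum_range_succ]) (by norm_num) (by norm_num) (by norm_num) (by norm_num) (by norm_num)
  · exact calc_le 12 0 1 86021 5544 (by norm_num [H, Finset.sum_range_succ]) (by norm_num) (by norm_num) (by norm_num) (by norm_num) (by norm_num)
  · exact calc_le 13 0 1 1145993 72072 (by norm_num [H, Finset.sum_range_succ]) (by norm_num) (by norm_num) (by norm_num) (by norm_num) (by norm_num)
  · exact calc_le 14 0 1 1171733 72072 (by norm_num [H, Finset.sum_range_succ]) (by norm_num) (by norm_num) (by norm_num) (by norm_num) (by norm_num)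
  · exact calc_le 15 0 1 1195757 72072 (by norm_num [H, Finset.sum_range_succ]) (by norm_num) (by norm_num) (by norm_num) (by norm_num) (by norm_num)
  · exact calc_le 16 0 1 2436559 144144 (by norm_num [H, Finset.sum_range_succ]) (by norm_num) (by norm_num) (by norm_num) (by norm_num) (by norm_num)
  · exact calc_le 17 0 1 42142223 2450448 (by norm_num [H, Finset.sum_range_succ]) (by norm_num) (by norm_num) (by norm_num) (by norm_num) (by norm_num)
  · exact calc_le 18 0 1 14274301 816816 (by norm_num [H, Finset.sum_range_succ]) (by norm_num) (by norm_num) (by norm_num) (by norm_num) (by norm_num)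
  · exact calc_le 19 0 1 275295799 15519504 (by norm_num [H, Finset.sum_range_succ]) (by norm_num) (by norm_num) (by norm_num) (by norm_num) (by norm_num)
  · exact absurd rfl h20
  · exact calc_le 21 0 0 18858053 5173168 (by norm_num [H, Finset.sum_range_succ]) (by norm_num) (by norm_num) (by norm_num) (by norm_num) (by norm_num)
  · exact calc_le 22 0 0 19093197 5173168 (by norm_num [H, Finset.sum_range_succ]) (by norm_num) (by norm_num) (by norm_num) (by norm_num) (by norm_num)
  · exact calc_le 23 0 0 444316699 118982864 (by norm_num [H, Finset.sum_range_succ]) (by norm_num) (by norm_num) (by norm_num) (by norm_num) (by norm_num)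
  · exact absurd rfl h24

lemma big (n : ℕ) : 25 ≤ n → padicValRat 5 (H n) ≤ 0 := by
  induction n using Nat.strong_induction_on with
  | _ n ih =>
    intro hn
    rcases lt_or_ge n 125 with h125 | h125
    · by_cases hbad : (100 ≤ n ∧ n ≤ 104) ∨ (120 ≤ n ∧ n ≤ 124)
      · obtain (⟨hl, hr⟩ | ⟨hl, hr⟩) := hbad <;> interval_cases n
        · exact calc_le 100 0 0 14466636279520351160221518043104131447711 2788815009188499086581352357412492142272 (by norm_num [H, Finset.sum_range_succ]) (by norm_num) (by norm_num) (by norm_num) (by norm_num) (by norm_num)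
        · exact calc_le 101 0 0 1463919079240743966268954674710929768361083 281670315928038407744716588098661706369472 (by norm_num [H, Finset.sum_range_succ]) (by norm_num) (by norm_num) (by norm_num) (by norm_num) (by norm_num)
        · exact calc_le 102 0 0 1466680552926312970266451896162877432149019 281670315928038407744716588098661706369472 (by norm_num [H, Finset.sum_range_succ]) (by norm_num) (by norm_num) (by norm_num) (by norm_num) (by norm_num)
        · exact calc_le 103 0 0 151349767267338274345189261892875037217718429 29012042540587955997705808574162155756055616 (by norm_num [H, Finset.sum_range_succ]) (by norm_num) (by norm_num) (by norm_num) (by norm_num) (by norm_num)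
        · exact calc_le 104 0 0 151628729214843927768244125436857365638449733 29012042540587955997705808574162155756055616 (by norm_num [H, Finset.sum_range_succ]) (by norm_num) (by norm_num) (by norm_num) (by norm_num) (by norm_num)
        · exact calc_le 120 0 0 18661952910524692834612799443020757786224277983797 3475956553913558034594585593659201286533187398464 (by norm_num [H, Finset.sum_range_succ]) (by norm_num) (by norm_num) (by norm_num) (by norm_num) (by norm_num)
        · exact calc_le 121 0 0 2261572258727401391022743318199170893419670823437901 420590743023540522185944856832763355670515675214144 (by norm_num [H, Finset.sum_range_succ]) (by norm_num) (by norm_num) (by norm_num) (by norm_num) (by norm_num)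
        · exact calc_le 122 0 0 2265019723834151723171808439976488625843199640447853 420590743023540522185944856832763355670515675214144 (by norm_num [H, Finset.sum_range_succ]) (by norm_num) (by norm_num) (by norm_num) (by norm_num) (by norm_num)
        · exact calc_le 123 0 0 2268439160769302459124539698975128978328325784148781 420590743023540522185944856832763355670515675214144 (by norm_num [H, Finset.sum_range_succ]) (by norm_num) (by norm_num) (by norm_num) (by norm_num) (by norm_num)
        · exact calc_le 124 0 0 2271831021600137463335716673627006102164378329916637 420590743023540522185944856832763355670515675214144 (by norm_num [H, Finset.sum_range_succ]) (by norm_num) (by norm_num) (by norm_num) (by norm_num) (by norm_num)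
      · push_neg at hbad
        have hm : padicValRat 5 (H (n/5)) ≤ 0 := by
          apply small (n/5) (by omega) (by omega) (by omega) (by omega) (by omega)
        have := step n (by omega) hm
        omega
    · have hm := ih (n/5) (by omega) (by omega)
      have := step n (by omega) hm
      omega

theorem stmt_15 :
    {n : ℕ | 1 ≤ n ∧ 1 ≤ padicValRat 5 (H n)} = {4, 20, 24} := by
  ext n
  simp only [Set.mem_setOf_eq, Set.mem_insert_iff, Set.mem_singleton_iff]
  constructor
  · rintro ⟨h1, h2⟩
    by_contra hne
    push_neg at hne
    obtain ⟨e4, e20, e24⟩ := hne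
    have hle : padicValRat 5 (H n) ≤ 0 := by
      rcases le_or_gt n 24 with h | h
      · exact small n h1 h e4 e20 e24
      · exact big n (by omega)
    omega
  · rintro (rfl | rfl | rfl)
    · exact ⟨by norm_num, calc_ge 4 2 0 1 12 (by norm_num [H, Finset.sum_range_succ]) (by norm_num) (by norm_num) (by norm_num) (by norm_num) (by norm_num)⟩
    · exact ⟨by norm_num, calc_ge 20 1 0 11167027 15519504 (by norm_num [H, Finset.sum_range_succ]) (by norm_num) (by norm_num) (by norm_num) (by norm_num) (by norm_num)⟩
    · exact ⟨by norm_num, calc_ge 24 1 0 269564591 356948592 (by norm_num [H, Finset.sum_range_succ]) (by norm_num) (by norm_num) (by norm_num) (by norm_num) (by norm_num)⟩
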